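/- Let G be a finite simple graph, and suppose {x_1,y_1} and {x_2,y_2} are disjoint regular edges of G such that the induced subgraph of G on the four vertices {x_1,y_1,x_2,y_2} is not a 4-cycle. Then in the contraction graph H = G_{{x_1,y_1}} (which has its unique loop at x_1), the edge {x_2,y_2} is again a regular edge. -/

import Mathlib

open MvPolynomial

/-- A graph possibly with loops: a symmetric relation on `V`. -/
structure LoopGraph (V : Type*) where
  Adj : V → V → Prop
  symm : ∀ u v : V, Adj u v → Adj v u

/-- The edge ideal of a graph possibly with loops. -/
noncomputable def LoopGraph.edgeIdeal (k : Type*) [Field k] {V : Type*}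
    (G : LoopGraph V) : Ideal (MvPolynomial V k) :=
  Ideal.span {p | ∃ u v : V, G.Adj u v ∧ p = X u * X v}

/-- An edge `{u,v}` of a graph possibly with loops is regular if no associated prime of
`R/I(G)` contains both `u` and `v`. -/
def LoopGraph.IsRegularEdge (k : Type*) [Field k] {V : Type*}
    (G : LoopGraph V) (u v : V) : Prop :=
  ∀ P ∈ associatedPrimes (MvPolynomial V k)
      (MvPolynomial V k ⧸ G.edgeIdeal k), ¬(X u ∈ P ∧ X v ∈ P)

/-- `X` is a vertex cover of a simple graph `G`. -/
def SimpleGraph.IsVtxCover {V : Type*} (G : SimpleGraph V) (X : Set V) : Prop :=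
  ∀ ⦃u v : V⦄, G.Adj u v → u ∈ X ∨ v ∈ X

/-- `X` is a minimal vertex cover of `G`. -/
def SimpleGraph.IsMinVertexCover {V : Type*} (G : SimpleGraph V) (X : Set V) : Prop :=
  G.IsVtxCover X ∧ ∀ Y ⊆ X, G.IsVtxCover Y → Y = X

/-- An edge `{x,y}` of a simple graph is regular: no minimal vertex cover contains
both endpoints. -/
def SimpleGraph.IsRegularEdge {V : Type*} (G : SimpleGraph V) (x y : V) : Prop :=
  ∀ X : Set V, G.IsMinVertexCover X → ¬(x ∈ X ∧ y ∈ X)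

/-- The contraction `G_e` of a simple graph along the edge `e = {x,y}`: identify `y`
with `x`; it acquires a loop at `x`. -/
def SimpleGraph.contractEdge {V : Type*} (G : SimpleGraph V) (x y : V) :
    LoopGraph {v : V // v ≠ y} where
  Adj a b := G.Adj a.1 b.1 ∨ (a.1 = x ∧ G.Adj y b.1) ∨ (b.1 = x ∧ G.Adj a.1 y)
  symm := by
    rintro ⟨a, ha⟩ ⟨b, hb⟩ (h | ⟨h1, h2⟩ | ⟨h1, h2⟩)
    · exact Or.inl h.symm
    · exact Or.inr (Or.inr ⟨h1, h2.symm⟩)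
    · exact Or.inr (Or.inl ⟨h1, h2.symm⟩)

section Aux

open MvPolynomial Finsupp

/-- Extend an independent pair to contradict regularity. -/
lemma key_indep {V : Type*} (G : SimpleGraph V) (x y a b : V)
    (hr : G.IsRegularEdge x y) (hxa : G.Adj x a) (hyb : G.Adj y b)
    (hab : a = b ∨ ¬ G.Adj a b) : False := by
  classical
  set S : Set (Set V) := {T | ∀ u ∈ T, ∀ v ∈ T, ¬ G.Adj u v} with hS
  have hT0 : ({a, b} : Set V) ∈ S := by
    intro u hu v hv hadj
    simp only [Set.mem_insert_iff, Set.mem_singleton_iff] at hu hv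
    rcases hu with h1 | h1 <;> rcases hv with h2 | h2 <;> rw [h1, h2] at hadj
    · exact G.loopless.irrefl a hadj
    · rcases hab with h | h
      · exact G.loopless.irrefl b (h ▸ hadj)
      · exact h hadj
    · rcases hab with h | h
      · exact G.loopless.irrefl b (h ▸ hadj)
      · exact h hadj.symm
    · exact G.loopless.irrefl b hadj
  have hchaincond : ∀ c ⊆ S, IsChain (· ⊆ ·) c → c.Nonempty →
      ∃ ub ∈ S, ∀ s ∈ c, s ⊆ ub := by
    intro c hcS hchain _
    refine ⟨⋃₀ c, ?_, fun s hs => Set.subset_sUnion_of_mem hs⟩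
    rintro u ⟨T1, hT1, hu⟩ v ⟨T2, hT2, hv⟩ hadj
    rcases hchain.total hT1 hT2 with h | h
    · exact hcS hT2 u (h hu) v hv hadj
    · exact hcS hT1 u hu v (h hv) hadj
  obtain ⟨M, hTM, hMmax⟩ := zorn_subset_nonempty S hchaincond _ hT0
  have hMind : ∀ u ∈ M, ∀ v ∈ M, ¬ G.Adj u v := hMmax.1
  have haM : a ∈ M := hTM (Set.mem_insert _ _)
  have hbM : b ∈ M := hTM (Set.mem_insert_of_mem _ rfl)
  have hxM : x ∉ M := fun hx => hMind x hx a haM hxa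
  have hyM : y ∉ M := fun hy => hMind y hy b hbM hyb
  have hcov : G.IsVtxCover Mᶜ := by
    intro u v huv
    by_contra hc
    push_neg at hc
    simp only [Set.mem_compl_iff, not_not] at hc
    exact hMind u hc.1 v hc.2 huv
  have hmin : G.IsMinVertexCover Mᶜ := by
    refine ⟨hcov, fun Y hYM hYcov => ?_⟩
    have hYc : Yᶜ ∈ S := by
      intro u hu v hv hadj
      rcases hYcov hadj with h | h
      · exact hu h
      · exact hv h
    have hMY : M ⊆ Yᶜ := fun w hw hwY => (hYM hwY) hw
    have : Yᶜ = M := subset_antisymm (hMmax.2 hYc hMY) hMY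
    rw [← compl_compl Y, this]
  exact hr Mᶜ hmin ⟨hxM, hyM⟩

lemma edgeIdeal_mem_iff (k : Type*) [Field k] {W : Type*} (H : LoopGraph W)
    (p : MvPolynomial W k) :
    p ∈ H.edgeIdeal k ↔ ∀ d ∈ p.support, ∃ u v : W, H.Adj u v ∧
      Finsupp.single u 1 + Finsupp.single v 1 ≤ d := by
  have hXX : ∀ u v : W, (X u * X v : MvPolynomial W k)
      = monomial (Finsupp.single u 1 + Finsupp.single v 1) 1 := fun u v => by
    rw [← pow_one (X u), ← pow_one (X v), X_pow_eq_monomial, X_pow_eq_monomial,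
      monomial_mul, one_mul]
  have hset : {p : MvPolynomial W k | ∃ u v : W, H.Adj u v ∧ p = X u * X v}
      = ((fun d => monomial d (1 : k)) ''
        {d | ∃ u v : W, H.Adj u v ∧ d = Finsupp.single u 1 + Finsupp.single v 1}) := by
    ext q
    simp only [Set.mem_image, Set.mem_setOf_eq]
    constructor
    · rintro ⟨u, v, h, rfl⟩
      exact ⟨_, ⟨u, v, h, rfl⟩, (hXX u v).symm⟩
    · rintro ⟨d, ⟨u, v, h, rfl⟩, rfl⟩
      exact ⟨u, v, h, (hXX u v).symm⟩
  have heq : H.edgeIdeal k = Ideal.span ((fun d => monomial d (1 : k)) ''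
      {d | ∃ u v : W, H.Adj u v ∧ d = Finsupp.single u 1 + Finsupp.single v 1}) := by
    unfold LoopGraph.edgeIdeal
    rw [hset]
  rw [heq, mem_ideal_span_monomial_image]
  constructor
  · intro h d hd
    obtain ⟨si, ⟨u, v, huv, rfl⟩, hle⟩ := h d hd
    exact ⟨u, v, huv, hle⟩
  · intro h d hd
    obtain ⟨u, v, huv, hle⟩ := h d hd
    exact ⟨_, ⟨u, v, huv, rfl⟩, hle⟩

lemma mem_ann_iff {k : Type*} [Field k] {W : Type*} (I : Ideal (MvPolynomial W k))
    (f r : MvPolynomial W k) :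
    r ∈ (Submodule.span (MvPolynomial W k)
        {(Ideal.Quotient.mk I f : MvPolynomial W k ⧸ I)}).annihilator ↔ r * f ∈ I := by
  rw [Submodule.mem_annihilator_span_singleton]
  have : r • (Ideal.Quotient.mk I f) = Ideal.Quotient.mk I (r * f) := by
    rw [← Ideal.Quotient.mk_eq_mk, ← Ideal.Quotient.mk_eq_mk, ← Submodule.Quotient.mk_smul,
      smul_eq_mul]
  rw [this, Ideal.Quotient.eq_zero_iff_mem]

lemma pair_le {W : Type*} (m : W →₀ ℕ) (a b : W) (hab : a ≠ b)
    (ha : 1 ≤ m a) (hb : 1 ≤ m b) :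
    Finsupp.single a 1 + Finsupp.single b 1 ≤ m := by
  classical
  rw [Finsupp.le_def]
  intro s
  rw [Finsupp.add_apply]
  rcases eq_or_ne a s with rfl | has
  · rw [Finsupp.single_eq_same, Finsupp.single_eq_of_ne' hab.symm]
    omega
  · rw [Finsupp.single_eq_of_ne' has]
    rcases eq_or_ne b s with rfl | hbs
    · rw [Finsupp.single_eq_same]; omega
    · rw [Finsupp.single_eq_of_ne' hbs]; omega

lemma extract_neighbor {W : Type*} (H : LoopGraph W) (m : W →₀ ℕ)
    (hm : ∀ u v : W, H.Adj u v → ¬ (Finsupp.single u 1 + Finsupp.single v 1 ≤ m))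
    (w : W) (hloop : ¬ H.Adj w w)
    (h : ∃ u v, H.Adj u v ∧
      Finsupp.single u 1 + Finsupp.single v 1 ≤ Finsupp.single w 1 + m) :
    ∃ b, H.Adj w b ∧ b ≠ w ∧ 1 ≤ m b := by
  classical
  obtain ⟨u, v, huv, hle⟩ := h
  by_cases huw : u = w <;> by_cases hvw : v = w
  · rw [huw, hvw] at huv
    exact absurd huv hloop
  · refine ⟨v, (show H.Adj w v by rw [← huw]; exact huv), hvw, ?_⟩
    have h1 := Finsupp.le_def.mp hle v
    rw [Finsupp.add_apply, Finsupp.add_apply, Finsupp.single_eq_same,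
      Finsupp.single_eq_of_ne' (fun h : u = v => hvw (h.symm.trans huw)),
      Finsupp.single_eq_of_ne' (fun h : w = v => hvw h.symm)] at h1
    omega
  · refine ⟨u, (show H.Adj w u by rw [← hvw]; exact H.symm u v huv), huw, ?_⟩
    have h1 := Finsupp.le_def.mp hle u
    rw [Finsupp.add_apply, Finsupp.add_apply, Finsupp.single_eq_same,
      Finsupp.single_eq_of_ne' (fun h : v = u => huw (h.symm.trans hvw)),
      Finsupp.single_eq_of_ne' (fun h : w = u => huw h.symm)] at h1
    omega
  · exfalso
    apply hm u v huv
    rw [Finsupp.le_def]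
    intro s
    have h1 := Finsupp.le_def.mp hle s
    rw [Finsupp.add_apply, Finsupp.add_apply] at h1
    rw [Finsupp.add_apply]
    rcases eq_or_ne w s with rfl | hws
    · rw [Finsupp.single_eq_of_ne' (fun h : u = w => huw h),
        Finsupp.single_eq_of_ne' (fun h : v = w => hvw h)]
      omega
    · rw [Finsupp.single_eq_of_ne' hws] at h1
      omega

end Aux

/-- if `{x₁,y₁}` and `{x₂,y₂}` are disjoint regular edges of a simple graph
`G` whose four vertices do not induce a 4-cycle, then `{x₂,y₂}` is a regular edge of the
contraction `H = G_{x₁ y₁}`. -/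
theorem regular_edge_descends_to_contraction
    {k : Type*} [Field k] {V : Type*} [Fintype V]
    (G : SimpleGraph V) (x₁ y₁ x₂ y₂ : V)
    (h12 : x₁ ≠ x₂) (h1y2 : x₁ ≠ y₂) (hy12 : y₁ ≠ x₂) (hy1y2 : y₁ ≠ y₂)
    (he₁ : G.Adj x₁ y₁) (he₂ : G.Adj x₂ y₂)
    (hr₁ : G.IsRegularEdge x₁ y₁) (hr₂ : G.IsRegularEdge x₂ y₂)
    (hnc : ¬((G.Adj x₂ x₁ ∧ G.Adj y₂ y₁ ∧ ¬ G.Adj x₂ y₁ ∧ ¬ G.Adj y₂ x₁) ∨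
             (G.Adj x₂ y₁ ∧ G.Adj y₂ x₁ ∧ ¬ G.Adj x₂ x₁ ∧ ¬ G.Adj y₂ y₁))) :
    (G.contractEdge x₁ y₁).IsRegularEdge k
      ⟨x₂, hy12.symm⟩ ⟨y₂, hy1y2.symm⟩ := by
  classical
  intro P hP hcon
  obtain ⟨hx2P, hy2P⟩ := hcon
  obtain ⟨hprime, q, hPeq⟩ := isAssociatedPrime_iff.mp hP
  obtain ⟨f, rfl⟩ := Ideal.Quotient.mk_surjective q
  set x₂' : {v : V // v ≠ y₁} := ⟨x₂, hy12.symm⟩ with hx2'def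
  set y₂' : {v : V // v ≠ y₁} := ⟨y₂, hy1y2.symm⟩ with hy2'def
  set x₁' : {v : V // v ≠ y₁} := ⟨x₁, he₁.ne⟩ with hx1'def
  set H := G.contractEdge x₁ y₁ with hHdef
  have hmem : ∀ r, r ∈ P ↔ r * f ∈ H.edgeIdeal k := fun r => by
    rw [hPeq, ← mem_ann_iff (H.edgeIdeal k) f r, Submodule.mem_colon_singleton, Submodule.mem_bot,
      Submodule.mem_annihilator_span_singleton]
  have hfI : f ∉ H.edgeIdeal k := fun h =>
    hprime.ne_top ((Ideal.eq_top_iff_one _).mpr ((hmem 1).mpr (by rwa [one_mul])))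
  have hx2f : X x₂' * f ∈ H.edgeIdeal k := (hmem _).mp hx2P
  have hy2f : X y₂' * f ∈ H.edgeIdeal k := (hmem _).mp hy2P
  rw [edgeIdeal_mem_iff] at hx2f hy2f
  rw [edgeIdeal_mem_iff] at hfI
  push_neg at hfI
  obtain ⟨m, hmsup, hm⟩ := hfI
  have hnoadj : ∀ c d : {v : V // v ≠ y₁}, c ≠ d → 1 ≤ m c → 1 ≤ m d → ¬ H.Adj c d :=
    fun c d hne hc hd hadj => hm c d hadj (pair_le m c d hne hc hd)
  -- extract a neighbor of x₂' in the support of m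
  have hdx : Finsupp.single x₂' 1 + m ∈ (X x₂' * f).support := by
    rw [MvPolynomial.support_X_mul]
    exact Finset.mem_map.mpr ⟨m, hmsup, rfl⟩
  have hdy : Finsupp.single y₂' 1 + m ∈ (X y₂' * f).support := by
    rw [MvPolynomial.support_X_mul]
    exact Finset.mem_map.mpr ⟨m, hmsup, rfl⟩
  have hloopx2 : ¬ H.Adj x₂' x₂' := by
    rintro (h | ⟨h, -⟩ | ⟨h, -⟩)
    · exact G.loopless.irrefl x₂ h
    · exact h12 h.symm
    · exact h12 h.symm
  have hloopy2 : ¬ H.Adj y₂' y₂' := by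
    rintro (h | ⟨h, -⟩ | ⟨h, -⟩)
    · exact G.loopless.irrefl y₂ h
    · exact h1y2 h.symm
    · exact h1y2 h.symm
  obtain ⟨b, hb_adj, hb_ne, hb1⟩ :=
    extract_neighbor H m hm x₂' hloopx2 (hx2f _ hdx)
  obtain ⟨b', hb'_adj, hb'_ne, hb'1⟩ :=
    extract_neighbor H m hm y₂' hloopy2 (hy2f _ hdy)
  -- case analysis on the form of the adjacencies in the contraction
  rcases hb_adj with hA | ⟨hcontra, -⟩ | ⟨hbx1, hx2y1⟩
  · rcases hb'_adj with hA' | ⟨hcontra', -⟩ | ⟨hb'x1, hy2y1⟩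
    · -- both genuine G-adjacencies
      have hab : (b : V) = (b' : V) ∨ ¬ G.Adj b b' := by
        by_cases h : b = b'
        · exact Or.inl (congrArg Subtype.val h)
        · exact Or.inr fun hadj => hnoadj b b' h hb1 hb'1 (Or.inl hadj)
      exact key_indep G x₂ y₂ b b' hr₂ hA hA' hab
    · exact h1y2 hcontra'.symm
    · -- y₂ side via contracted vertex
      have hmx1 : 1 ≤ m x₁' := (Subtype.ext hb'x1 : b' = x₁') ▸ hb'1
      by_cases hby : G.Adj b y₁
      · by_cases hbx1 : b = x₁'
        · have hx2x1 : G.Adj x₂ x₁ := by rw [hbx1] at hA; exact hA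
          by_cases h1 : G.Adj x₂ y₁
          · exact key_indep G x₂ y₂ y₁ y₁ hr₂ h1 hy2y1 (Or.inl rfl)
          · by_cases h2 : G.Adj y₂ x₁
            · exact key_indep G x₂ y₂ x₁ x₁ hr₂ hx2x1 h2 (Or.inl rfl)
            · exact hnc (Or.inl ⟨hx2x1, hy2y1, h1, h2⟩)
        · exact hnoadj b x₁' hbx1 hb1 hmx1 (Or.inr (Or.inr ⟨rfl, hby⟩))
      · exact key_indep G x₂ y₂ b y₁ hr₂ hA hy2y1 (Or.inr hby)
  · exact h12 hcontra.symm
  · rcases hb'_adj with hA' | ⟨hcontra', -⟩ | ⟨hb'x1, hy2y1⟩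
    · -- x₂ side via contracted vertex, y₂ side genuine
      have hmx1 : 1 ≤ m x₁' := (Subtype.ext hbx1 : b = x₁') ▸ hb1
      by_cases hb'y : G.Adj b' y₁
      · by_cases hb'x1 : b' = x₁'
        · have hy2x1 : G.Adj y₂ x₁ := by rw [hb'x1] at hA'; exact hA'
          by_cases h1 : G.Adj y₂ y₁
          · exact key_indep G x₂ y₂ y₁ y₁ hr₂ hx2y1 h1 (Or.inl rfl)
          · by_cases h2 : G.Adj x₂ x₁
            · exact key_indep G x₂ y₂ x₁ x₁ hr₂ h2 hy2x1 (Or.inl rfl)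
            · exact hnc (Or.inr ⟨hx2y1, hy2x1, h2, h1⟩)
        · exact hnoadj b' x₁' hb'x1 hb'1 hmx1 (Or.inr (Or.inr ⟨rfl, hb'y⟩))
      · exact key_indep G x₂ y₂ y₁ b' hr₂ hx2y1 hA' (Or.inr fun h => hb'y h.symm)
    · exact h1y2 hcontra'.symm
    · exact key_indep G x₂ y₂ y₁ y₁ hr₂ hx2y1 hy2y1 (Or.inl rfl)
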